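/- Let v, x, y ∈ ℝ with x ≠ 0 and y ≠ 0, and let z = (z₁,z₂,z₃) ∈ ℝ³ with z₁ ≠ 0 and z₂ ≠ 0. Set e₁ = (0,0,1), e₂ = (0,0,1), e₂' = (0,1,0), f₁ = (1,0,0). Then D₂(E,F,G,L') = e^{3v} · D₂(E,F,G,L), where G has line spanned by g₁ = z, L has line spanned by l₁ = (1,y,x), and L' has line spanned by l₁' = (1, e^{3v}·y, x). In particular, under the bulging deformation with parameter v, which moves the vertex (1,y,x) to (1,e^{3v}y,x), the second shear parameter σ₂ = log D₂ changes to σ₂ + 3v, so the difference σ₂ − σ₁ increases by 6v and measures the bulging parameter. -/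

import Mathlib

/-- The determinant of the 3×3 real matrix with columns `a`, `b`, `c`. -/
noncomputable def det3 (a b c : Fin 3 → ℝ) : ℝ :=
  Matrix.det (Matrix.transpose (Matrix.of ![a, b, c]))

/-- The second double ratio `D₂(E,F,G,L)` of a quadruple of flags whose lines are spanned
by `e₁, f₁, g₁, l₁` and where the plane of `E` is spanned by `e₂, e₂'`. -/
noncomputable def doubleRatio₂ (e₁ e₂ e₂' f₁ g₁ l₁ : Fin 3 → ℝ) : ℝ :=
  -(det3 e₂ e₂' g₁ / det3 e₂ e₂' l₁) * (det3 e₁ f₁ l₁ / det3 e₁ f₁ g₁)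

open Real in
/-- Under the bulging deformation with parameter `v`, which moves the vertex `(1,y,x)` to
`(1, e^{3v}·y, x)`, the second double ratio gets multiplied by `e^{3v}`; hence the second
shear parameter `σ₂ = log D₂` changes to `σ₂ + 3v`, and the difference `σ₂ − σ₁`
increases by `6v`. -/
theorem doubleRatio₂_bulging (v x y : ℝ) (hx : x ≠ 0) (hy : y ≠ 0)
    (z : Fin 3 → ℝ) (hz₁ : z 0 ≠ 0) (hz₂ : z 1 ≠ 0) :
    doubleRatio₂ ![0, 0, 1] ![0, 0, 1] ![0, 1, 0] ![1, 0, 0] z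
        ![1, exp (3 * v) * y, x]
    = exp (3 * v) * doubleRatio₂ ![0, 0, 1] ![0, 0, 1] ![0, 1, 0] ![1, 0, 0] z
        ![1, y, x] := by
  have he : exp (3 * v) ≠ 0 := (exp_pos _).ne'
  simp only [doubleRatio₂, det3, Matrix.det_fin_three, Matrix.transpose_apply,
    Matrix.of_apply, Matrix.cons_val', Matrix.cons_val_zero, Matrix.cons_val_one,
    Matrix.head_cons, Matrix.cons_val_two, Matrix.tail_cons, Matrix.empty_val',
    Matrix.cons_val_fin_one, Matrix.head_fin_const]
  field_simp
  ring_nf
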